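/- Let G be a strongly regular graph with parameters (19, 6, 1, 2), let {a, b, c} be a triangle in G, and let A and B be the sets of neighbors of a and of b excluding the triangle vertices. Then every vertex of A is adjacent to exactly one vertex of B, and every vertex of B is adjacent to exactly one vertex of A; hence the adjacency relation between A and B defines a bijection from A to B. -/
import Mathlib

private lemma srg_unique_common_adj {V : Type} [Fintype V] [DecidableEq V]
    (G : SimpleGraph V) [DecidableRel G.Adj]
    (h : G.IsSRGWith 19 6 1 2) {u v w : V} (huv : G.Adj u v) (huw : G.Adj u w)
    (hvw : G.Adj v w) {x : V} (hux : G.Adj u x) (hvx : G.Adj v x) : x = w := by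
  have hcard := h.of_adj u v huv
  rw [Fintype.card_eq_one_iff] at hcard
  obtain ⟨z, hz⟩ := hcard
  have hx : (⟨x, by rw [SimpleGraph.mem_commonNeighbors]; exact ⟨hux, hvx⟩⟩ :
      G.commonNeighbors u v) = z := hz _
  have hw : (⟨w, by rw [SimpleGraph.mem_commonNeighbors]; exact ⟨huw, hvw⟩⟩ :
      G.commonNeighbors u v) = z := hz _
  have := hx.trans hw.symm
  exact congrArg Subtype.val this

private lemma srg_aux {V : Type} [Fintype V] [DecidableEq V]
    (G : SimpleGraph V) [DecidableRel G.Adj]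
    (h : G.IsSRGWith 19 6 1 2) (a b c : V)
    (hab : G.Adj a b) (hac : G.Adj a c) (hbc : G.Adj b c)
    (x : V) (hxa : G.Adj a x) (hxb : x ≠ b) (hxc : x ≠ c) :
    ∃! y : V, (G.Adj b y ∧ y ≠ a ∧ y ≠ c) ∧ G.Adj x y := by
  -- x is not adjacent to b (the unique common neighbor of a,b is c)
  have hnxb : ¬ G.Adj x b := fun hadj =>
    hxc (srg_unique_common_adj G h hab hac hbc hxa hadj.symm)
  -- x is not adjacent to c (the unique common neighbor of a,c is b)
  have hnxc : ¬ G.Adj x c := fun hadj =>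
    hxb (srg_unique_common_adj G h hac hab hbc.symm hxa hadj.symm)
  -- x and b are non-adjacent, so they have exactly two common neighbors; a is one.
  have hcard := h.of_not_adj hxb hnxb
  have hsetcard : (G.commonNeighbors x b).toFinset.card = 2 := by
    rw [Set.toFinset_card]; exact hcard
  have haS : a ∈ (G.commonNeighbors x b).toFinset := by
    rw [Set.mem_toFinset, SimpleGraph.mem_commonNeighbors]
    exact ⟨hxa.symm, hab.symm⟩
  have herase : ((G.commonNeighbors x b).toFinset.erase a).card = 1 := by
    rw [Finset.card_erase_of_mem haS, hsetcard]
  obtain ⟨y, hy⟩ := Finset.card_eq_one.mp herase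
  have hyprop : y ∈ (G.commonNeighbors x b).toFinset.erase a := by rw [hy]; simp
  rw [Finset.mem_erase, Set.mem_toFinset, SimpleGraph.mem_commonNeighbors] at hyprop
  obtain ⟨hya, hxy, hby⟩ := hyprop
  have hyc : y ≠ c := fun hyc => hnxc (hyc ▸ hxy)
  refine ⟨y, ⟨⟨hby, hya, hyc⟩, hxy⟩, ?_⟩
  rintro y' ⟨⟨hby', hy'a, hy'c⟩, hxy'⟩
  have : y' ∈ (G.commonNeighbors x b).toFinset.erase a := by
    rw [Finset.mem_erase, Set.mem_toFinset, SimpleGraph.mem_commonNeighbors]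
    exact ⟨hy'a, hxy', hby'⟩
  rw [hy, Finset.mem_singleton] at this
  exact this

/-- For a triangle {a,b,c} in an srg(19,6,1,2), every vertex of A is adjacent to exactly
one vertex of B and vice versa; hence adjacency defines a bijection from A to B. -/
theorem srg_19_6_1_2_A_B_bijection
    {V : Type} [Fintype V] [DecidableEq V] (G : SimpleGraph V) [DecidableRel G.Adj]
    (h : G.IsSRGWith 19 6 1 2) (a b c : V)
    (hab : G.Adj a b) (hac : G.Adj a c) (hbc : G.Adj b c)
    (A B : Finset V)
    (hA : A = Finset.univ.filter (fun v => G.Adj a v ∧ v ≠ b ∧ v ≠ c))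
    (hB : B = Finset.univ.filter (fun v => G.Adj b v ∧ v ≠ a ∧ v ≠ c)) :
    (∀ x ∈ A, ∃! y : V, y ∈ B ∧ G.Adj x y) ∧
    (∀ y ∈ B, ∃! x : V, x ∈ A ∧ G.Adj x y) ∧
    ∃ f : V → V, Set.BijOn f ↑A ↑B ∧ ∀ x ∈ A, G.Adj x (f x) := by
  have hAmem : ∀ x, x ∈ A ↔ G.Adj a x ∧ x ≠ b ∧ x ≠ c := by
    intro x; rw [hA]; simp
  have hBmem : ∀ y, y ∈ B ↔ G.Adj b y ∧ y ≠ a ∧ y ≠ c := by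
    intro y; rw [hB]; simp
  have part1 : ∀ x ∈ A, ∃! y : V, y ∈ B ∧ G.Adj x y := by
    intro x hx
    rw [hAmem] at hx
    obtain ⟨hxa, hxb, hxc⟩ := hx
    obtain ⟨y, hy, huniq⟩ := srg_aux G h a b c hab hac hbc x hxa hxb hxc
    exact ⟨y, ⟨(hBmem y).mpr hy.1, hy.2⟩, fun y' hy' =>
      huniq y' ⟨(hBmem y').mp hy'.1, hy'.2⟩⟩
  have part2 : ∀ y ∈ B, ∃! x : V, x ∈ A ∧ G.Adj x y := by
    intro y hy
    rw [hBmem] at hy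
    obtain ⟨hyb, hya, hyc⟩ := hy
    obtain ⟨x, hx, huniq⟩ := srg_aux G h b a c hab.symm hbc hac y hyb hya hyc
    refine ⟨x, ⟨(hAmem x).mpr hx.1, hx.2.symm⟩, fun x' hx' =>
      huniq x' ⟨(hAmem x').mp hx'.1, hx'.2.symm⟩⟩
  refine ⟨part1, part2, ?_⟩
  have hex : ∀ x : V, ∃ y : V, x ∈ A → (y ∈ B ∧ G.Adj x y) := by
    intro x
    by_cases hx : x ∈ A
    · obtain ⟨y, hy, _⟩ := part1 x hx
      exact ⟨y, fun _ => hy⟩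
    · exact ⟨x, fun h' => absurd h' hx⟩
  choose f hf using hex
  refine ⟨f, ⟨?_, ?_, ?_⟩, fun x hx => (hf x hx).2⟩
  · intro x hx; exact (hf x hx).1
  · intro x1 hx1 x2 hx2 heq
    have h1 := hf x1 hx1
    have h2 := hf x2 hx2
    obtain ⟨x0, _, huniq⟩ := part2 (f x1) h1.1
    have e1 : x1 = x0 := huniq x1 ⟨hx1, h1.2⟩
    have e2 : x2 = x0 := huniq x2 ⟨hx2, heq ▸ h2.2⟩
    exact e1.trans e2.symm
  · intro y hy
    obtain ⟨x, ⟨hxA, hxy⟩, _⟩ := part2 y hy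
    refine ⟨x, hxA, ?_⟩
    obtain ⟨y0, _, huniq⟩ := part1 x hxA
    have := (huniq (f x) (hf x hxA)).trans (huniq y ⟨hy, hxy⟩).symm
    exact this
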